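/- arXiv:2509.25611 — 3 statements merged into one kernel-verified Lean document; each statement's English description precedes it below -/
import Mathlib

section
/- Let Ω ⊂ ℝ^d be a nonempty compact set. Then the set M^+_{fin,dif}(Ω) of finitely supported measures with pairwise-distinct disjoint subset sums of weights is dense in M^+(Ω) with respect to the extended 1-Wasserstein metric: for every μ ∈ M^+(Ω) and every ε > 0 there exists ν ∈ M^+_{fin,dif}(Ω) with W1(μ, ν) < ε. -/
open MeasureTheory Filter Set

/-- The 1-Wasserstein distance, via Kantorovich–Rubinstein duality: the supremum of
`∫ φ dμ - ∫ φ dν` over 1-Lipschitz functions `φ`. -/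
noncomputable def W1 {E : Type*} [MeasurableSpace E] [PseudoMetricSpace E]
    (μ ν : Measure E) : ℝ :=
  ⨆ φ : {φ : E → ℝ // LipschitzWith 1 φ}, ((∫ x, φ.1 x ∂μ) - ∫ x, φ.1 x ∂ν)

/-- The extension of the 1-Wasserstein distance to positive finite measures:
`W1(s₁μ₁, s₂μ₂) = W1(μ₁, μ₂) + |s₁ - s₂|` for probability measures `μᵢ` and `sᵢ > 0`. -/
noncomputable def W1ext {E : Type*} [MeasurableSpace E] [PseudoMetricSpace E]
    (μ ν : Measure E) : ℝ :=
  W1 ((μ Set.univ)⁻¹ • μ) ((ν Set.univ)⁻¹ • ν)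
    + |(μ Set.univ).toReal - (ν Set.univ).toReal|

/-- `M⁺(Ω)`: the strictly positive finite Borel measures supported in `Ω`. -/
def Mplus {E : Type*} [MeasurableSpace E] (Ω : Set E) : Set (Measure E) :=
  {μ | μ Set.univ ≠ 0 ∧ μ Set.univ ≠ ⊤ ∧ μ Ωᶜ = 0}

/-- `M⁺_{fin,dif}(Ω)`: finitely supported positive measures `∑ aᵢ δ_{xᵢ}` such that any two
disjoint nonempty subsets of the weights have different sums. -/
def MplusFinDif {E : Type*} [MeasurableSpace E] (Ω : Set E) : Set (Measure E) :=
  {μ | ∃ n : ℕ, 0 < n ∧ ∃ (x : Fin n → E) (a : Fin n → ℝ),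
    (∀ i, x i ∈ Ω) ∧ (∀ i, 0 < a i) ∧
    μ = ∑ i, ENNReal.ofReal (a i) • Measure.dirac (x i) ∧
    ∀ J K : Finset (Fin n), J.Nonempty → K.Nonempty → Disjoint J K →
      ∑ j ∈ J, a j ≠ ∑ k ∈ K, a k}


lemma sum_pow_three_range_lt (m : ℕ) : ∑ k ∈ Finset.range m, 3^k < 3^m := by
  induction m with
  | zero => simp
  | succ m ih =>
    rw [Finset.sum_range_succ, pow_succ]
    omega

lemma sum_pow_three_lt (m : ℕ) (K : Finset ℕ) (h : ∀ k ∈ K, k < m) :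
    ∑ k ∈ K, 3^k < 3^m := by
  calc ∑ k ∈ K, 3^k ≤ ∑ k ∈ Finset.range m, 3^k := by
        apply Finset.sum_le_sum_of_subset
        intro k hk; exact Finset.mem_range.mpr (h k hk)
    _ < 3^m := sum_pow_three_range_lt m

lemma sum_pow_three_ne {J K : Finset ℕ} (hJ : J.Nonempty) (hK : K.Nonempty)
    (hd : Disjoint J K) : ∑ j ∈ J, 3^j ≠ ∑ k ∈ K, 3^k := by
  have hJK : (J ∪ K).Nonempty := hJ.mono Finset.subset_union_left
  set m := (J ∪ K).max' hJK with hm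
  have hmem := (J ∪ K).max'_mem hJK
  have hle : ∀ i ∈ J ∪ K, i ≤ m := fun i hi => Finset.le_max' _ i hi
  rcases Finset.mem_union.mp hmem with hmJ | hmK
  · intro heq
    have h1 : 3^m ≤ ∑ j ∈ J, 3^j := Finset.single_le_sum (fun i _ => Nat.zero_le _) hmJ
    have h2 : ∑ k ∈ K, 3^k < 3^m := by
      apply sum_pow_three_lt
      intro k hk
      have hkm := hle k (Finset.mem_union_right _ hk)
      have hne : k ≠ m := by
        rintro rfl
        exact (Finset.disjoint_left.mp hd hmJ) hk
      omega
    omega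
  · intro heq
    have h1 : 3^m ≤ ∑ k ∈ K, 3^k := Finset.single_le_sum (fun i _ => Nat.zero_le _) hmK
    have h2 : ∑ j ∈ J, 3^j < 3^m := by
      apply sum_pow_three_lt
      intro j hj
      have hjm := hle j (Finset.mem_union_left _ hj)
      have hne : j ≠ m := by
        rintro rfl
        exact (Finset.disjoint_left.mp hd hj) hmK
      omega
    omega

lemma sum_pow_three_real_ne {n : ℕ} {J K : Finset (Fin n)} (hJ : J.Nonempty)
    (hK : K.Nonempty) (hd : Disjoint J K) :
    ∑ j ∈ J, (3:ℝ)^(j:ℕ) ≠ ∑ k ∈ K, (3:ℝ)^(k:ℕ) := by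
  have hinj : Function.Injective (Fin.val : Fin n → ℕ) := Fin.val_injective
  have h := sum_pow_three_ne (J := J.image Fin.val) (K := K.image Fin.val)
    (hJ.image _) (hK.image _) (Finset.disjoint_image hinj |>.mpr hd)
  intro heq
  apply h
  have e1 : ((∑ j ∈ J.image Fin.val, (3:ℕ)^j : ℕ) : ℝ) = ∑ j ∈ J, (3:ℝ)^(j:ℕ) := by
    rw [Finset.sum_image (fun a _ b _ hab => hinj hab)]
    push_cast
    rfl
  have e2 : ((∑ k ∈ K.image Fin.val, (3:ℕ)^k : ℕ) : ℝ) = ∑ k ∈ K, (3:ℝ)^(k:ℕ) := by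
    rw [Finset.sum_image (fun a _ b _ hab => hinj hab)]
    push_cast
    rfl
  exact_mod_cast e1.trans (heq.trans e2.symm)

lemma arith_bound {n : ℕ} (a c f : Fin n → ℝ) (φ0 s s' τ C R ε : ℝ)
    (ha0 : ∀ i, 0 ≤ a i) (hc0 : ∀ i, 0 < c i)
    (hsum_a : ∑ i, a i = s) (hsum_c : ∑ i, c i = C)
    (hs'_eq : s' = s + τ * C) (hs_pos : 0 < s) (hτ0 : 0 < τ) (hCpos : 0 < C)
    (hf : ∀ i, |f i - φ0| ≤ R) (hR0 : 0 ≤ R)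
    (hτ2' : τ * (8*(R+1)*C) ≤ s*ε) :
    ∑ i, (a i / s - (a i + τ * c i) / s') * f i ≤ ε/4 := by
  have hτC : 0 < τ * C := mul_pos hτ0 hCpos
  have hs'pos : 0 < s' := by rw [hs'_eq]; linarith
  have hsum_a' : ∑ i, (a i + τ * c i) = s' := by
    rw [hs'_eq, ← hsum_a, ← hsum_c, Finset.mul_sum, ← Finset.sum_add_distrib]
  have hsum_b : ∑ i, (a i + τ * c i) / s' = 1 := by
    rw [← Finset.sum_div, hsum_a', div_self hs'pos.ne']
  have hsum_p : ∑ i, a i / s = 1 := by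
    rw [← Finset.sum_div, hsum_a, div_self hs_pos.ne']
  have hqi : ∀ i, a i / s - (a i + τ * c i) / s' = τ * (a i * C - s * c i) / (s * s') := by
    intro i
    have hs'ne : s + τ * C ≠ 0 := by linarith
    rw [hs'_eq]
    field_simp
    ring
  have habs : ∀ i, |a i / s - (a i + τ * c i) / s'| ≤ τ * (a i * C + s * c i) / (s * s') := by
    intro i
    rw [hqi i, abs_div, abs_mul, abs_of_pos hτ0, abs_of_pos (mul_pos hs_pos hs'pos)]
    gcongr
    calc |a i * C - s * c i| ≤ |a i * C| + |s * c i| := abs_sub _ _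
      _ = a i * C + s * c i := by
          rw [abs_of_nonneg (mul_nonneg (ha0 i) hCpos.le),
            abs_of_nonneg (mul_nonneg hs_pos.le (hc0 i).le)]
  have hqsum : ∑ i, |a i / s - (a i + τ * c i) / s'| ≤ 2 * τ * C / s := by
    calc ∑ i, |a i / s - (a i + τ * c i) / s'|
        ≤ ∑ i, τ * (a i * C + s * c i) / (s * s') := Finset.sum_le_sum fun i _ => habs i
      _ = τ * (s * C + s * C) / (s * s') := by
          rw [← Finset.sum_div, ← Finset.mul_sum]
          congr 2
          rw [Finset.sum_add_distrib, ← Finset.sum_mul, hsum_a, ← Finset.mul_sum, hsum_c]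
      _ = 2 * τ * C / s' := by
          field_simp
          ring
      _ ≤ 2 * τ * C / s := by
          gcongr
          nlinarith [hτC]
  have hzero : ∑ i, (a i / s - (a i + τ * c i) / s') = 0 := by
    rw [Finset.sum_sub_distrib, hsum_p, hsum_b, sub_self]
  have hre : ∑ i, (a i / s - (a i + τ * c i) / s') * f i
      = ∑ i, (a i / s - (a i + τ * c i) / s') * (f i - φ0) := by
    have expand : ∑ i, (a i / s - (a i + τ * c i) / s') * (f i - φ0)
        = ∑ i, (a i / s - (a i + τ * c i) / s') * f i
          - (∑ i, (a i / s - (a i + τ * c i) / s')) * φ0 := by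
      rw [Finset.sum_mul, ← Finset.sum_sub_distrib]
      apply Finset.sum_congr rfl
      intros; ring
    rw [expand, hzero, zero_mul, sub_zero]
  rw [hre]
  calc ∑ i, (a i / s - (a i + τ * c i) / s') * (f i - φ0)
      ≤ ∑ i, |a i / s - (a i + τ * c i) / s'| * R := by
        apply Finset.sum_le_sum
        intro i _
        calc (a i / s - (a i + τ * c i) / s') * (f i - φ0)
            ≤ |(a i / s - (a i + τ * c i) / s') * (f i - φ0)| := le_abs_self _
          _ = |a i / s - (a i + τ * c i) / s'| * |f i - φ0| := abs_mul _ _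
          _ ≤ |a i / s - (a i + τ * c i) / s'| * R :=
              mul_le_mul_of_nonneg_left (hf i) (abs_nonneg _)
      _ = (∑ i, |a i / s - (a i + τ * c i) / s'|) * R := by rw [Finset.sum_mul]
      _ ≤ (2 * τ * C / s) * R := mul_le_mul_of_nonneg_right hqsum hR0
      _ ≤ ε/4 := by
          rw [div_mul_eq_mul_div, div_le_iff₀ hs_pos]
          nlinarith [mul_nonneg hτC.le hR0, hτC.le]

/-- For a nonempty compact `Ω ⊆ ℝ^d`, the set `M⁺_{fin,dif}(Ω)` is dense in
`M⁺(Ω)` with respect to the extended 1-Wasserstein metric. -/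
theorem MplusFinDif_dense {d : ℕ} (Ω : Set (EuclideanSpace ℝ (Fin d)))
    (hΩne : Ω.Nonempty) (hΩcpt : IsCompact Ω) :
    ∀ μ ∈ Mplus Ω, ∀ ε > (0 : ℝ), ∃ ν ∈ MplusFinDif Ω, W1ext μ ν < ε := by
  classical
  intro μ hμ ε hε
  obtain ⟨hμ0, hμtop, hμΩc⟩ := hμ
  obtain ⟨x₀, hx₀⟩ := hΩne
  have hΩmeas : MeasurableSet Ω := hΩcpt.isClosed.measurableSet
  set s : ℝ := (μ Set.univ).toReal with hs_def
  have hs_pos : 0 < s := ENNReal.toReal_pos hμ0 hμtop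
  obtain ⟨R₀, hR₀⟩ := hΩcpt.isBounded.subset_closedBall x₀
  set R : ℝ := max R₀ 0 with hR_def
  have hR0 : (0:ℝ) ≤ R := le_max_right _ _
  have hR : Ω ⊆ Metric.closedBall x₀ R :=
    hR₀.trans (Metric.closedBall_subset_closedBall (le_max_left _ _))
  set δ : ℝ := ε/4 with hδ_def
  have hδpos : 0 < δ := by positivity
  -- finite cover of Ω by δ-balls centered in Ω
  have hcov0 : Ω ⊆ ⋃ z : Ω, Metric.ball (z : EuclideanSpace ℝ (Fin d)) δ := by
    intro y hy
    exact Set.mem_iUnion.mpr ⟨⟨y, hy⟩, Metric.mem_ball_self hδpos⟩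
  obtain ⟨T, hT⟩ := hΩcpt.elim_finite_subcover _ (fun _ : Ω => Metric.isOpen_ball) hcov0
  set n : ℕ := T.card with hn_def
  set x : Fin n → EuclideanSpace ℝ (Fin d) :=
    fun i => ((T.equivFin.symm i : {z // z ∈ T}) : Ω) with hx_def
  have hxΩ : ∀ i, x i ∈ Ω := fun i => ((T.equivFin.symm i : {z // z ∈ T}) : Ω).2
  have hcov : ∀ y ∈ Ω, ∃ i : Fin n, y ∈ Metric.ball (x i) δ := by
    intro y hy
    obtain ⟨z, hzT, hyz⟩ := Set.mem_iUnion₂.mp (hT hy)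
    refine ⟨T.equivFin ⟨z, hzT⟩, ?_⟩
    simpa [hx_def] using hyz
  have hn : 0 < n := (hcov x₀ hx₀).elim fun i _ => i.pos
  haveI : Nonempty (Fin n) := ⟨⟨0, hn⟩⟩
  -- partition of Ω
  set A : Fin n → Set (EuclideanSpace ℝ (Fin d)) := fun i =>
    (Ω ∩ Metric.ball (x i) δ) \ ⋃ j, ⋃ (_ : j < i), Metric.ball (x j) δ with hA_def
  have hAmeas : ∀ i, MeasurableSet (A i) := fun i =>
    (hΩmeas.inter measurableSet_ball).diff
      (MeasurableSet.iUnion fun j => MeasurableSet.iUnion fun _ => measurableSet_ball)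
  have hAsub : ∀ i, A i ⊆ Metric.ball (x i) δ := fun i y hy => hy.1.2
  have hAΩ : ∀ i, A i ⊆ Ω := fun i y hy => hy.1.1
  have hAdisj : Pairwise (Function.onFun Disjoint A) := by
    have key : ∀ i j : Fin n, i < j → Disjoint (A i) (A j) := by
      intro i j hij
      rw [Set.disjoint_left]
      intro y hyi hyj
      exact hyj.2 (Set.mem_iUnion.mpr ⟨i, Set.mem_iUnion.mpr ⟨hij, hAsub i hyi⟩⟩)
    intro i j hij
    rcases hij.lt_or_gt with h | h
    · exact key i j h
    · exact (key j i h).symm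
  have hAunion : (⋃ i, A i) = Ω := by
    apply Set.Subset.antisymm
    · exact Set.iUnion_subset hAΩ
    · intro y hy
      have hne : (Finset.univ.filter fun i => y ∈ Metric.ball (x i) δ).Nonempty := by
        obtain ⟨i, hi⟩ := hcov y hy
        exact ⟨i, Finset.mem_filter.mpr ⟨Finset.mem_univ _, hi⟩⟩
      set i₀ := (Finset.univ.filter fun i => y ∈ Metric.ball (x i) δ).min' hne with hi₀
      have hi₀mem := (Finset.univ.filter fun i => y ∈ Metric.ball (x i) δ).min'_mem hne
      refine Set.mem_iUnion.mpr ⟨i₀, ⟨⟨hy, (Finset.mem_filter.mp hi₀mem).2⟩, ?_⟩⟩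
      intro hmem
      obtain ⟨j, hj⟩ := Set.mem_iUnion.mp hmem
      obtain ⟨hji, hyj⟩ := Set.mem_iUnion.mp hj
      have : i₀ ≤ j := Finset.min'_le _ j (Finset.mem_filter.mpr ⟨Finset.mem_univ _, hyj⟩)
      exact absurd hji (not_lt.mpr this)
  -- weights
  set a : Fin n → ℝ := fun i => (μ (A i)).toReal with ha_def
  have hafin : ∀ i, μ (A i) ≠ ⊤ :=
    fun i => ((measure_mono (Set.subset_univ _)).trans_lt (lt_top_iff_ne_top.mpr hμtop)).ne
  have ha0 : ∀ i, 0 ≤ a i := fun i => ENNReal.toReal_nonneg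
  have hμΩ : μ Ω = μ Set.univ := by
    have h := measure_union (μ := μ) (disjoint_compl_right (a := Ω)) hΩmeas.compl
    rw [Set.union_compl_self] at h
    rw [h, hμΩc, add_zero]
  have hμA : μ Set.univ = ∑ i, μ (A i) := by
    rw [← hμΩ, ← hAunion, measure_iUnion hAdisj hAmeas, tsum_fintype]
  have hsum_a : ∑ i, a i = s := by
    rw [hs_def, hμA, ENNReal.toReal_sum (fun i _ => hafin i)]
  -- perturbation
  set c : Fin n → ℝ := fun i => (3:ℝ)^(i:ℕ) with hc_def
  have hc0 : ∀ i, 0 < c i := fun i => by positivity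
  set C : ℝ := ∑ i, c i with hC_def
  have hCpos : 0 < C := Finset.sum_pos (fun i _ => hc0 i) Finset.univ_nonempty
  have h8C : (0:ℝ) < 8*C := by linarith
  have hR1 : (0:ℝ) < R+1 := by linarith
  have h8RC : (0:ℝ) < 8*(R+1)*C := mul_pos (mul_pos (by norm_num) hR1) hCpos
  set t₀ : ℝ := min (ε/(8*C)) (s*ε/(8*(R+1)*C)) with ht₀_def
  have ht₀pos : 0 < t₀ := lt_min (div_pos hε h8C) (div_pos (mul_pos hs_pos hε) h8RC)
  set B : Set ℝ := Set.range (fun p : Finset (Fin n) × Finset (Fin n) =>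
      ((∑ k ∈ p.2, a k) - ∑ j ∈ p.1, a j) / ((∑ j ∈ p.1, c j) - ∑ k ∈ p.2, c k)) with hB_def
  have hBfin : B.Finite := Set.finite_range _
  obtain ⟨τ, ⟨hτ0, hτt₀⟩, hτB⟩ := ((Set.Ioo_infinite ht₀pos).diff hBfin).nonempty
  set a' : Fin n → ℝ := fun i => a i + τ * c i with ha'_def
  have ha'0 : ∀ i, 0 < a' i := fun i => add_pos_of_nonneg_of_pos (ha0 i) (mul_pos hτ0 (hc0 i))
  set s' : ℝ := ∑ i, a' i with hs'_def
  have hs'_eq : s' = s + τ * C := by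
    rw [hs'_def, hC_def, Finset.mul_sum, ← hsum_a, ← Finset.sum_add_distrib]
  have hτC : 0 < τ * C := mul_pos hτ0 hCpos
  have hs'pos : 0 < s' := by rw [hs'_eq]; linarith
  have hss' : s ≤ s' := by rw [hs'_eq]; linarith
  set ν : Measure (EuclideanSpace ℝ (Fin d)) :=
    ∑ i, ENNReal.ofReal (a' i) • Measure.dirac (x i) with hν_def
  -- distinct subset sums
  have hdiff : ∀ J K : Finset (Fin n), J.Nonempty → K.Nonempty → Disjoint J K →
      ∑ j ∈ J, a' j ≠ ∑ k ∈ K, a' k := by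
    intro J K hJ hK hd heq
    have hcne : (∑ j ∈ J, c j) - (∑ k ∈ K, c k) ≠ 0 :=
      sub_ne_zero.mpr (sum_pow_three_real_ne hJ hK hd)
    apply hτB
    refine ⟨(J, K), ?_⟩
    have h1 : ∑ j ∈ J, a' j = ∑ j ∈ J, a j + τ * ∑ j ∈ J, c j := by
      rw [Finset.mul_sum, ← Finset.sum_add_distrib]
    have h2 : ∑ k ∈ K, a' k = ∑ k ∈ K, a k + τ * ∑ k ∈ K, c k := by
      rw [Finset.mul_sum, ← Finset.sum_add_distrib]
    show ((∑ k ∈ K, a k) - ∑ j ∈ J, a j) / ((∑ j ∈ J, c j) - ∑ k ∈ K, c k) = τ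
    rw [div_eq_iff hcne]
    linear_combination h1 - h2 - heq
  have hν_mem : ν ∈ MplusFinDif Ω := ⟨n, hn, x, a', hxΩ, ha'0, hν_def, hdiff⟩
  -- total mass of ν
  have hνuniv : ν Set.univ = ENNReal.ofReal s' := by
    rw [hν_def, Measure.finset_sum_apply]
    rw [hs'_def, ENNReal.ofReal_sum_of_nonneg (fun i _ => (ha'0 i).le)]
    apply Finset.sum_congr rfl
    intro i _
    rw [Measure.smul_apply, Measure.dirac_apply_of_mem (Set.mem_univ _), smul_eq_mul, mul_one]
  have hν_toReal : (ν Set.univ).toReal = s' := by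
    rw [hνuniv, ENNReal.toReal_ofReal hs'pos.le]
  -- normalized measures
  set μb : Measure (EuclideanSpace ℝ (Fin d)) := (μ Set.univ)⁻¹ • μ with hμb_def
  set νb : Measure (EuclideanSpace ℝ (Fin d)) := (ν Set.univ)⁻¹ • ν with hνb_def
  have hμbprob : IsProbabilityMeasure μb :=
    ⟨by rw [hμb_def, Measure.smul_apply, smul_eq_mul, ENNReal.inv_mul_cancel hμ0 hμtop]⟩
  haveI := hμbprob
  haveI : IsFiniteMeasureOnCompacts μb := ⟨fun _ _ => measure_lt_top _ _⟩
  have hμbA : ∀ i, (μb (A i)).toReal = a i / s := by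
    intro i
    rw [hμb_def, Measure.smul_apply, smul_eq_mul, ENNReal.toReal_mul, ENNReal.toReal_inv,
      ha_def, hs_def]
    rw [div_eq_inv_mul]
  have hμbΩc : μb Ωᶜ = 0 := by
    rw [hμb_def, Measure.smul_apply, hμΩc, smul_eq_mul, mul_zero]
  have hres : μb.restrict Ω = μb :=
    Measure.restrict_eq_self_of_ae_mem (mem_ae_iff.mpr hμbΩc)
  -- numeric bounds
  have hτ1 : τ ≤ ε/(8*C) := hτt₀.le.trans (min_le_left _ _)
  have hτ2 : τ ≤ s*ε/(8*(R+1)*C) := hτt₀.le.trans (min_le_right _ _)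
  have hmass_le : τ * C ≤ ε/8 := by
    rw [le_div_iff₀ h8C] at hτ1
    nlinarith
  have hτ2' : τ * (8*(R+1)*C) ≤ s*ε := by
    rw [le_div_iff₀ h8RC] at hτ2
    linarith
  -- W1 bound
  have hW1 : W1 μb νb ≤ δ + ε/4 := by
    haveI : Nonempty {φ : EuclideanSpace ℝ (Fin d) → ℝ // LipschitzWith 1 φ} :=
      ⟨⟨fun _ => 0, (LipschitzWith.const 0).weaken zero_le_one⟩⟩
    apply ciSup_le
    rintro ⟨φ, hφ⟩
    have hφcont : Continuous φ := hφ.continuous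
    have hintΩ : IntegrableOn φ Ω μb := hφcont.continuousOn.integrableOn_compact' hΩcpt hΩmeas
    -- integral wrt νb
    have hφint_dirac : ∀ i, Integrable φ (ENNReal.ofReal (a' i) • Measure.dirac (x i)) := by
      intro i
      refine Integrable.smul_measure ?_ ENNReal.ofReal_ne_top
      have hae : (fun _ => φ (x i)) =ᵐ[Measure.dirac (x i)] φ := by
        rw [MeasureTheory.ae_dirac_eq]
        exact Filter.eventually_pure.mpr rfl
      exact (integrable_const (φ (x i))).congr hae
    have hφν : ∫ y, φ y ∂ν = ∑ i, a' i * φ (x i) := by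
      rw [hν_def, integral_finset_sum_measure (fun i _ => hφint_dirac i)]
      apply Finset.sum_congr rfl
      intro i _
      rw [integral_smul_measure, integral_dirac, ENNReal.toReal_ofReal (ha'0 i).le, smul_eq_mul]
    have hφνb : ∫ y, φ y ∂νb = ∑ i, (a' i / s') * φ (x i) := by
      rw [hνb_def, integral_smul_measure, hφν, hνuniv, ENNReal.toReal_inv,
        ENNReal.toReal_ofReal hs'pos.le, smul_eq_mul, Finset.mul_sum]
      apply Finset.sum_congr rfl
      intro i _
      rw [div_eq_inv_mul, mul_assoc]
    -- integral wrt μb decomposed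
    have hφμb : ∫ y, φ y ∂μb = ∑ i, ∫ y in A i, φ y ∂μb := by
      have h1 : ∫ y, φ y ∂μb = ∫ y in (⋃ i, A i), φ y ∂μb := by rw [hAunion, hres]
      rw [h1, integral_iUnion hAmeas hAdisj (by rw [hAunion]; exact hintΩ), tsum_fintype]
    -- per-piece bound
    have hpiece : ∀ i, |∫ y in A i, φ y ∂μb - (a i / s) * φ (x i)| ≤ δ * (a i / s) := by
      intro i
      have hintA : IntegrableOn φ (A i) μb := hintΩ.mono_set (hAΩ i)
      have hconst : IntegrableOn (fun _ => φ (x i)) (A i) μb :=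
        integrableOn_const (measure_lt_top _ _).ne
      have heq : ∫ y in A i, φ y ∂μb - (a i / s) * φ (x i)
          = ∫ y in A i, (φ y - φ (x i)) ∂μb := by
        rw [integral_sub hintA hconst, setIntegral_const, smul_eq_mul, measureReal_def, hμbA i]
      rw [heq]
      have hbound : ∀ᵐ y ∂(μb.restrict (A i)), ‖φ y - φ (x i)‖ ≤ δ := by
        filter_upwards [ae_restrict_mem (hAmeas i)] with y hy
        have hd : dist (φ y) (φ (x i)) ≤ 1 * dist y (x i) := hφ.dist_le_mul y (x i)
        have hball := hAsub i hy
        rw [Metric.mem_ball] at hball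
        calc ‖φ y - φ (x i)‖ = dist (φ y) (φ (x i)) := (Real.dist_eq _ _).symm
          _ ≤ 1 * dist y (x i) := hd
          _ ≤ δ := by rw [one_mul]; exact hball.le
      calc |∫ y in A i, (φ y - φ (x i)) ∂μb|
          ≤ δ * ((μb.restrict (A i)) Set.univ).toReal :=
            norm_integral_le_of_norm_le_const hbound
        _ = δ * (a i / s) := by rw [Measure.restrict_apply_univ, hμbA i]
    have hterm1 : ∑ i, (∫ y in A i, φ y ∂μb - (a i / s) * φ (x i)) ≤ δ := by
      calc ∑ i, (∫ y in A i, φ y ∂μb - (a i / s) * φ (x i))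
          ≤ ∑ i, |∫ y in A i, φ y ∂μb - (a i / s) * φ (x i)| :=
            Finset.sum_le_sum fun i _ => le_abs_self _
        _ ≤ ∑ i, δ * (a i / s) := Finset.sum_le_sum fun i _ => hpiece i
        _ = δ := by
            rw [← Finset.mul_sum, ← Finset.sum_div, hsum_a, div_self hs_pos.ne', mul_one]
    have hterm2 : ∑ i, (a i / s - a' i / s') * φ (x i) ≤ ε/4 := by
      have hf : ∀ i, |φ (x i) - φ x₀| ≤ R := by
        intro i
        have hd : dist (φ (x i)) (φ x₀) ≤ 1 * dist (x i) x₀ := hφ.dist_le_mul (x i) x₀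
        have h2 : dist (x i) x₀ ≤ R := hR (hxΩ i)
        calc |φ (x i) - φ x₀| = dist (φ (x i)) (φ x₀) := (Real.dist_eq _ _).symm
          _ ≤ 1 * dist (x i) x₀ := hd
          _ ≤ R := by rw [one_mul]; exact h2
      have := arith_bound a c (fun i => φ (x i)) (φ x₀) s s' τ C R ε ha0 hc0 hsum_a rfl
        hs'_eq hs_pos hτ0 hCpos hf hR0 hτ2'
      simpa [ha'_def] using this
    calc (∫ y, φ y ∂μb) - ∫ y, φ y ∂νb
        = ∑ i, ((∫ y in A i, φ y ∂μb - (a i / s) * φ (x i))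
            + (a i / s - a' i / s') * φ (x i)) := by
          rw [hφμb, hφνb, ← Finset.sum_sub_distrib]
          apply Finset.sum_congr rfl
          intros; ring
      _ = (∑ i, (∫ y in A i, φ y ∂μb - (a i / s) * φ (x i)))
            + ∑ i, (a i / s - a' i / s') * φ (x i) := Finset.sum_add_distrib
      _ ≤ δ + ε/4 := add_le_add hterm1 hterm2
  -- conclusion
  refine ⟨ν, hν_mem, ?_⟩
  have hmass : |(μ Set.univ).toReal - (ν Set.univ).toReal| = τ * C := by
    rw [hν_toReal, ← hs_def, hs'_eq]
    rw [abs_of_nonpos (by linarith)]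
    ring
  show W1 ((μ Set.univ)⁻¹ • μ) ((ν Set.univ)⁻¹ • ν)
    + |(μ Set.univ).toReal - (ν Set.univ).toReal| < ε
  rw [← hμb_def, ← hνb_def, hmass]
  have : δ + ε/4 + ε/8 < ε := by rw [hδ_def]; linarith
  linarith [hW1, hmass_le]
end

section
/- Let Ω ⊂ ℝ^d be a nonempty compact set and let f : M^+(Ω) → M^+(ℝ^{d'}) be a support-preserving map continuous in the extended 1-Wasserstein metric. Let μ₀ = Σ_{i=1}^n a⁰ᵢ δ_{x⁰ᵢ} ∈ M^+_{fin,dif,(n)}(Ω) and μ_p = Σ_{i=1}^n aᵖᵢ δ_{xᵖᵢ} with aᵖᵢ > 0, xᵖᵢ ∈ Ω, and suppose xᵖᵢ → x⁰ᵢ and aᵖᵢ → a⁰ᵢ as p → ∞ for all i. Let y⁰₁,…,y⁰_n ∈ ℝ^{d'} and, for each p, yᵖ₁,…,yᵖ_n ∈ ℝ^{d'} satisfy f(μ₀) = Σ_{i=1}^n a⁰ᵢ δ_{y⁰ᵢ} and f(μ_p) = Σ_{i=1}^n aᵖᵢ δ_{yᵖᵢ}. Then for every j ∈ {1,…,n},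 yᵖⱼ → y⁰ⱼ as p → ∞. -/
open MeasureTheory Filter Set

/-- A map `f : M⁺(Ω) → M⁺(ℝ^{d'})` is support-preserving if for every `n`, `c > 0` and
`x₁, …, xₙ ∈ Ω`, writing `μ = ∑ (c/n) δ_{xᵢ}`, there exist `y₁, …, yₙ` with
`f(μ) = ∑ (c/n) δ_{yᵢ}` and `xⱼ = xᵢ → yⱼ = yᵢ`. -/
def SupportPreserving {E F : Type*} [MeasurableSpace E] [MeasurableSpace F]
    (Ω : Set E) (f : Measure E → Measure F) : Prop :=
  ∀ n : ℕ, 0 < n → ∀ c : ℝ, 0 < c → ∀ x : Fin n → E, (∀ i, x i ∈ Ω) →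
    ∃ y : Fin n → F,
      f (∑ i, ENNReal.ofReal (c / n) • Measure.dirac (x i))
        = ∑ i, ENNReal.ofReal (c / n) • Measure.dirac (y i) ∧
      ∀ i j, x i = x j → y i = y j

/-- Continuity of `f : M⁺(Ω) → M⁺` with respect to the extended 1-Wasserstein metric. -/
def W1Continuous {E F : Type*} [MeasurableSpace E] [PseudoMetricSpace E]
    [MeasurableSpace F] [PseudoMetricSpace F]
    (Ω : Set E) (f : Measure E → Measure F) : Prop :=
  ∀ μ ∈ Mplus Ω, ∀ ε > (0 : ℝ), ∃ δ > (0 : ℝ), ∀ ν ∈ Mplus Ω,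
    W1ext μ ν < δ → W1ext (f μ) (f ν) < ε


set_option linter.unusedSectionVars false
set_option maxHeartbeats 1000000

section Aux
variable {E : Type*} [MeasurableSpace E] [PseudoMetricSpace E]

lemma W1_nonneg (μ ν : Measure E) : 0 ≤ W1 μ ν := by
  by_cases h : BddAbove (Set.range fun φ : {φ : E → ℝ // LipschitzWith 1 φ} =>
      ((∫ x, φ.1 x ∂μ) - ∫ x, φ.1 x ∂ν))
  · have := le_ciSup h ⟨fun _ => (0:ℝ), (LipschitzWith.const 0).weaken (by norm_num)⟩
    simpa [W1] using this
  · rw [W1, Real.iSup_of_not_bddAbove h]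

lemma W1_le {μ ν : Measure E} {B : ℝ} (hB : 0 ≤ B)
    (h : ∀ φ : E → ℝ, LipschitzWith 1 φ → (∫ x, φ x ∂μ) - ∫ x, φ x ∂ν ≤ B) :
    W1 μ ν ≤ B :=
  Real.iSup_le (fun φ => h φ.1 φ.2) hB

lemma le_W1 {μ ν : Measure E} {B : ℝ}
    (h : ∀ φ : E → ℝ, LipschitzWith 1 φ → (∫ x, φ x ∂μ) - ∫ x, φ x ∂ν ≤ B)
    {φ₀ : E → ℝ} (hφ₀ : LipschitzWith 1 φ₀) :
    (∫ x, φ₀ x ∂μ) - ∫ x, φ₀ x ∂ν ≤ W1 μ ν :=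
  le_ciSup (f := fun φ : {φ : E → ℝ // LipschitzWith 1 φ} =>
      ((∫ x, φ.1 x ∂μ) - ∫ x, φ.1 x ∂ν))
    ⟨B, by rintro r ⟨φ, rfl⟩; exact h φ.1 φ.2⟩ ⟨φ₀, hφ₀⟩

variable [MeasurableSingletonClass E] {n : ℕ}

lemma integrable_dirac' (φ : E → ℝ) (x : E) : Integrable φ (Measure.dirac x) :=
  (integrable_const (φ x)).congr (ae_eq_dirac φ).symm

lemma integral_wsum (w : Fin n → ℝ) (hw : ∀ i, 0 ≤ w i) (u : Fin n → E) (φ : E → ℝ) :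
    ∫ z, φ z ∂(∑ i, ENNReal.ofReal (w i) • Measure.dirac (u i)) = ∑ i, w i * φ (u i) := by
  rw [integral_finset_sum_measure (fun i _ =>
    ((integrable_dirac' φ (u i)).smul_measure (by simp)))]
  refine Finset.sum_congr rfl fun i _ => ?_
  rw [integral_smul_measure, integral_dirac, ENNReal.toReal_ofReal (hw i), smul_eq_mul]

lemma mass_wsum (w : Fin n → ℝ) (hw : ∀ i, 0 ≤ w i) (u : Fin n → E) :
    (∑ i, ENNReal.ofReal (w i) • Measure.dirac (u i)) Set.univ
      = ENNReal.ofReal (∑ i, w i) := by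
  rw [Measure.finset_sum_apply, ENNReal.ofReal_sum_of_nonneg (fun i _ => hw i)]
  refine Finset.sum_congr rfl fun i _ => ?_
  simp [Measure.smul_apply]

lemma integral_normalized (w : Fin n → ℝ) (hw : ∀ i, 0 ≤ w i) (hs : 0 < ∑ i, w i)
    (u : Fin n → E) (φ : E → ℝ) :
    ∫ z, φ z ∂(((∑ i, ENNReal.ofReal (w i) • Measure.dirac (u i)) Set.univ)⁻¹
        • (∑ i, ENNReal.ofReal (w i) • Measure.dirac (u i)))
      = ∑ i, (w i / ∑ k, w k) * φ (u i) := by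
  rw [mass_wsum w hw, integral_smul_measure, integral_wsum w hw,
    ENNReal.toReal_inv, ENNReal.toReal_ofReal hs.le, smul_eq_mul, Finset.mul_sum]
  refine Finset.sum_congr rfl fun i _ => ?_
  ring

lemma mem_Mplus_wsum {Ω : Set E} (hΩ : MeasurableSet Ω)
    (w : Fin n → ℝ) (hw : ∀ i, 0 ≤ w i) (hs : 0 < ∑ i, w i)
    (u : Fin n → E) (hu : ∀ i, u i ∈ Ω) :
    (∑ i, ENNReal.ofReal (w i) • Measure.dirac (u i)) ∈
      Mplus Ω := by
  refine ⟨?_, ?_, ?_⟩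
  · rw [mass_wsum w hw]; simpa using hs
  · rw [mass_wsum w hw]; exact ENNReal.ofReal_ne_top
  · rw [Measure.finset_sum_apply]
    refine Finset.sum_eq_zero fun i _ => ?_
    rw [Measure.smul_apply, Measure.dirac_apply' _ hΩ.compl]
    simp [Set.indicator_of_notMem, hu i]

end Aux


lemma discrete_term_bound {E : Type*} [PseudoMetricSpace E] {n : ℕ}
    (V W : Fin n → ℝ) (hW : ∀ i, 0 ≤ W i) (hV1 : ∑ i, V i = 1) (hW1 : ∑ i, W i = 1)
    (u x : Fin n → E) (b : E) {φ : E → ℝ} (hφ : LipschitzWith 1 φ) :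
    (∑ i, V i * φ (u i)) - (∑ i, W i * φ (x i))
      ≤ ∑ i, |V i - W i| * dist (u i) b + ∑ i, W i * dist (u i) (x i) := by
  have hlip : ∀ a c : E, |φ a - φ c| ≤ dist a c := by
    intro a c
    have := hφ.dist_le_mul a c
    rw [Real.dist_eq] at this; simpa using this
  have key : (∑ i, V i * φ (u i)) - (∑ i, W i * φ (x i))
      = (∑ i, (V i - W i) * (φ (u i) - φ b)) + ∑ i, W i * (φ (u i) - φ (x i)) := by
    have h0 : ∑ i, (V i - W i) = 0 := by
      rw [Finset.sum_sub_distrib, hV1, hW1, sub_self]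
    have : ∀ i ∈ Finset.univ, (V i - W i) * (φ (u i) - φ b) + W i * (φ (u i) - φ (x i))
        = V i * φ (u i) - W i * φ (x i) - (V i - W i) * φ b := fun i _ => by ring
    rw [← Finset.sum_add_distrib, Finset.sum_congr rfl this, Finset.sum_sub_distrib,
      Finset.sum_sub_distrib, ← Finset.sum_mul, h0, zero_mul, sub_zero]
  rw [key]
  gcongr ?_ + ?_
  · refine Finset.sum_le_sum fun i _ => ?_
    calc (V i - W i) * (φ (u i) - φ b) ≤ |(V i - W i) * (φ (u i) - φ b)| := le_abs_self _
    _ = |V i - W i| * |φ (u i) - φ b| := abs_mul _ _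
    _ ≤ |V i - W i| * dist (u i) b := by
        exact mul_le_mul_of_nonneg_left (hlip _ _) (abs_nonneg _)
  · refine Finset.sum_le_sum fun i _ => ?_
    calc W i * (φ (u i) - φ (x i)) ≤ W i * |φ (u i) - φ (x i)| := by
          exact mul_le_mul_of_nonneg_left (le_abs_self _) (hW i)
    _ ≤ W i * dist (u i) (x i) := mul_le_mul_of_nonneg_left (hlip _ _) (hW i)

open Metric in

lemma key_stability {F : Type*} [MetricSpace F] {n : ℕ}
    (A0 : Fin n → ℝ) (Ap : ℕ → Fin n → ℝ)
    (hA0pos : ∀ i, 0 < A0 i) (hAppos : ∀ p i, 0 < Ap p i)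
    (hApconv : ∀ i, Tendsto (fun p => Ap p i) atTop (nhds (A0 i)))
    (hdif : ∀ N M : Finset (Fin n), N ≠ M → ∑ i ∈ N, A0 i ≠ ∑ i ∈ M, A0 i)
    (y0 : Fin n → F) (yp : ℕ → Fin n → F)
    (V : ℕ → ℝ) (hV : Tendsto V atTop (nhds 0))
    (habs : ∀ p (φ : F → ℝ), LipschitzWith 1 φ →
      |(∑ i, A0 i * φ (y0 i)) - ∑ i, Ap p i * φ (yp p i)| ≤ V p)
    (j : Fin n) : Tendsto (fun p => yp p j) atTop (nhds (y0 j)) := by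
  classical
  -- step 0: T p := ∑ |A0 - Ap| tends to 0
  set T : ℕ → ℝ := fun p => ∑ i, |A0 i - Ap p i| with hTdef
  have hT : Tendsto T atTop (nhds 0) := by
    have : Tendsto (fun p => ∑ i, |A0 i - Ap p i|) atTop (nhds (∑ i : Fin n, (0:ℝ))) := by
      refine tendsto_finset_sum _ fun i _ => ?_
      have h1 : Tendsto (fun p => A0 i - Ap p i) atTop (nhds (A0 i - A0 i)) :=
        Tendsto.const_sub (A0 i) (hApconv i)
      rw [sub_self] at h1
      simpa using h1.abs
    simpa using this
  -- step 1: infDist (yp p i) S → 0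
  set S : Set F := Set.range y0 with hSdef
  have hSne : S.Nonempty := ⟨y0 j, Set.mem_range_self j⟩
  have hφS : LipschitzWith 1 (fun z : F => infDist z S) := lipschitz_infDist_pt S
  have hinf : ∀ i, Tendsto (fun p => infDist (yp p i) S) atTop (nhds 0) := by
    intro i
    have hkey : ∀ p, Ap p i * infDist (yp p i) S ≤ V p := by
      intro p
      have h := habs p (fun z => infDist z S) hφS
      have h0 : (∑ k, A0 k * infDist (y0 k) S) = 0 := by
        refine Finset.sum_eq_zero fun k _ => ?_
        rw [infDist_zero_of_mem (Set.mem_range_self k), mul_zero]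
      rw [h0, zero_sub, abs_neg, abs_of_nonneg (Finset.sum_nonneg fun k _ =>
        mul_nonneg (hAppos p k).le infDist_nonneg)] at h
      refine le_trans ?_ h
      exact Finset.single_le_sum (fun k _ => mul_nonneg (hAppos p k).le infDist_nonneg)
        (Finset.mem_univ i)
    refine squeeze_zero (g := fun p => V p / Ap p i) (fun p => infDist_nonneg) (fun p => ?_) ?_
    · exact (le_div_iff₀ (hAppos p i)).2 (by rw [mul_comm]; exact hkey p)
    · have := hV.div (hApconv i) (hA0pos i).ne'
      rw [zero_div] at this; exact this
  -- main: fix j, use Metric.tendsto_atTop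
  rw [Metric.tendsto_atTop]
  intro ε hε
  -- choose r
  obtain ⟨r, hr0, hrε, hrsep⟩ : ∃ r : ℝ, 0 < r ∧ r ≤ ε/2 ∧
      ∀ i k, y0 i ≠ y0 k → 5*r ≤ dist (y0 i) (y0 k) := by
    by_cases hD : (((Finset.univ : Finset (Fin n × Fin n)).filter
        (fun ik => y0 ik.1 ≠ y0 ik.2)).image (fun ik => dist (y0 ik.1) (y0 ik.2))).Nonempty
    · set Dset := (((Finset.univ : Finset (Fin n × Fin n)).filter
        (fun ik => y0 ik.1 ≠ y0 ik.2)).image (fun ik => dist (y0 ik.1) (y0 ik.2))) with hDdef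
      obtain ⟨m, hm, hmin⟩ : ∃ m ∈ Dset, ∀ x ∈ Dset, m ≤ x :=
        ⟨Dset.min' hD, Dset.min'_mem hD, fun x hx => Dset.min'_le x hx⟩
      rw [hDdef] at hm
      obtain ⟨ik, hik, heq⟩ := Finset.mem_image.1 hm
      have hikne : y0 ik.1 ≠ y0 ik.2 := (Finset.mem_filter.1 hik).2
      have hmpos : 0 < m := heq ▸ dist_pos.2 hikne
      refine ⟨min (ε/2) (m / 5), lt_min (half_pos hε) (by linarith), min_le_left _ _, ?_⟩
      intro i k hik'
      have hmem : dist (y0 i) (y0 k) ∈ Dset := by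
        rw [hDdef]
        exact Finset.mem_image_of_mem _ (Finset.mem_filter.2 ⟨Finset.mem_univ (i,k), hik'⟩)
      have hle := hmin _ hmem
      have h1 : 5 * min (ε/2) (m/5) ≤ 5 * (m/5) := by
        have := min_le_right (ε/2) (m/5); linarith
      calc 5 * min (ε/2) (m/5) ≤ 5 * (m/5) := h1
      _ = m := by ring
      _ ≤ dist (y0 i) (y0 k) := hle
    · refine ⟨ε/2, half_pos hε, le_refl _, fun i k hik => absurd ?_ hD⟩
      exact ⟨dist (y0 i) (y0 k),
        Finset.mem_image_of_mem _ (Finset.mem_filter.2 ⟨Finset.mem_univ (i,k), hik⟩)⟩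
  -- the cluster K and the gap ε₀
  set K : Finset (Fin n) := Finset.univ.filter (fun i => y0 i = y0 j) with hKdef
  have hjK : j ∈ K := Finset.mem_filter.2 ⟨Finset.mem_univ j, rfl⟩
  set cands : Finset ℝ := ((Finset.univ : Finset (Fin n)).powerset.filter
    (fun N => N ≠ K)).image (fun N => |(∑ i ∈ N, A0 i) - ∑ i ∈ K, A0 i|) with hcdef
  have hcne : cands.Nonempty := by
    refine ⟨_, Finset.mem_image_of_mem _ (Finset.mem_filter.2
      ⟨Finset.mem_powerset.2 (Finset.empty_subset _), ?_⟩)⟩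
    exact fun h => (Finset.ne_empty_of_mem hjK) h.symm
  obtain ⟨ε₀, hε₀mem, hε₀min⟩ : ∃ m ∈ cands, ∀ x ∈ cands, m ≤ x :=
    ⟨cands.min' hcne, cands.min'_mem hcne, fun x hx => cands.min'_le x hx⟩
  have hε₀pos : 0 < ε₀ := by
    rw [hcdef] at hε₀mem
    obtain ⟨N, hN, heq⟩ := Finset.mem_image.1 hε₀mem
    have hNK : N ≠ K := (Finset.mem_filter.1 hN).2
    rw [← heq]
    exact abs_pos.2 (sub_ne_zero.2 (hdif N K hNK))
  -- the plateau function
  set φk : F → ℝ := fun z => min r (max (2*r - dist z (y0 j)) 0) with hφkdef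
  have hφk : LipschitzWith 1 φk := by
    have hdist : LipschitzWith 1 (fun z : F => dist z (y0 j)) := LipschitzWith.dist_left _
    have hsub : LipschitzWith 1 (fun t : ℝ => 2*r - t) := by
      apply LipschitzWith.of_dist_le_mul
      intro s t
      rw [Real.dist_eq, Real.dist_eq, NNReal.coe_one, one_mul]
      have h5 : 2*r - s - (2*r - t) = -(s - t) := by ring
      rw [h5, abs_neg]
    have hψ : LipschitzWith 1 (fun t : ℝ => min r (max (2*r - t) 0)) :=
      (hsub.max_const 0).const_min r
    have hc := hψ.comp hdist
    rw [mul_one] at hc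
    exact hc
  -- values of φk at y0
  have hvalK : ∀ i, φk (y0 i) = if i ∈ K then r else 0 := by
    intro i
    by_cases hi : i ∈ K
    · rw [if_pos hi]
      have hyij : y0 i = y0 j := (Finset.mem_filter.1 hi).2
      show min r (max (2*r - dist (y0 i) (y0 j)) 0) = r
      rw [hyij, dist_self, sub_zero, max_eq_left (by linarith), min_eq_left (by linarith)]
    · rw [if_neg hi]
      have hne : y0 i ≠ y0 j := fun h => hi (Finset.mem_filter.2 ⟨Finset.mem_univ i, h⟩)
      have h5 := hrsep i j hne
      show min r (max (2*r - dist (y0 i) (y0 j)) 0) = 0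
      rw [max_eq_right (by linarith), min_eq_right hr0.le]
  have hsumK : (∑ i, A0 i * φk (y0 i)) = (∑ i ∈ K, A0 i) * r := by
    rw [Finset.sum_mul, hKdef, Finset.sum_filter]
    refine Finset.sum_congr rfl fun i _ => ?_
    rw [hvalK i, hKdef]
    by_cases hi : y0 i = y0 j <;> simp [hi]
  -- eventual facts
  have hEv1 : ∀ᶠ p in atTop, ∀ i, infDist (yp p i) S < r :=
    eventually_all.2 fun i => (hinf i).eventually_lt_const hr0
  have hEv2 : ∀ᶠ p in atTop, V p < r * (ε₀/2) :=
    hV.eventually_lt_const (by positivity)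
  have hEv3 : ∀ᶠ p in atTop, T p < ε₀/2 := hT.eventually_lt_const (by linarith)
  have hfinal : ∀ᶠ p in atTop, dist (yp p j) (y0 j) < ε := by
    filter_upwards [hEv1, hEv2, hEv3] with p h1 h2 h3
    set Np : Finset (Fin n) := Finset.univ.filter (fun i => dist (yp p i) (y0 j) ≤ r) with hNpdef
    have hval : ∀ i, φk (yp p i) = if i ∈ Np then r else 0 := by
      intro i
      by_cases hi : i ∈ Np
      · rw [if_pos hi]
        have hd : dist (yp p i) (y0 j) ≤ r := (Finset.mem_filter.1 hi).2
        show min r (max (2*r - dist (yp p i) (y0 j)) 0) = r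
        rw [max_eq_left (by linarith), min_eq_left (by linarith)]
      · rw [if_neg hi]
        have hd : ¬ dist (yp p i) (y0 j) ≤ r :=
          fun h => hi (Finset.mem_filter.2 ⟨Finset.mem_univ i, h⟩)
        push_neg at hd
        obtain ⟨z, hz, hzlt⟩ := (infDist_lt_iff hSne).1 (h1 i)
        obtain ⟨i', rfl⟩ := hz
        have hne : y0 i' ≠ y0 j := by
          intro he
          rw [he] at hzlt
          linarith
        have h5 := hrsep i' j hne
        have htri : dist (y0 i') (y0 j) ≤ dist (yp p i) (y0 i') + dist (yp p i) (y0 j) := by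
          rw [dist_comm (yp p i) (y0 i')]
          exact dist_triangle _ _ _
        show min r (max (2*r - dist (yp p i) (y0 j)) 0) = 0
        rw [max_eq_right (by linarith), min_eq_right hr0.le]
    have hsumNp : (∑ i, Ap p i * φk (yp p i)) = (∑ i ∈ Np, Ap p i) * r := by
      rw [Finset.sum_mul, hNpdef, Finset.sum_filter]
      refine Finset.sum_congr rfl fun i _ => ?_
      rw [hval i, hNpdef]
      by_cases hi : dist (yp p i) (y0 j) ≤ r <;> simp [hi]
    -- main estimate
    have h4 := habs p φk hφk
    rw [hsumK, hsumNp] at h4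
    have h5 : |(∑ i ∈ Np, Ap p i) - ∑ i ∈ K, A0 i| ≤ V p / r := by
      rw [le_div_iff₀ hr0]
      calc |(∑ i ∈ Np, Ap p i) - ∑ i ∈ K, A0 i| * r
          = |((∑ i ∈ Np, Ap p i) - ∑ i ∈ K, A0 i) * r| := by
            rw [abs_mul, abs_of_pos hr0]
      _ = |(∑ i ∈ K, A0 i) * r - (∑ i ∈ Np, Ap p i) * r| := by
            rw [← abs_neg]; congr 1; ring
      _ ≤ V p := h4
    have h6 : |(∑ i ∈ Np, A0 i) - ∑ i ∈ K, A0 i| < ε₀ := by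
      have ha : |(∑ i ∈ Np, A0 i) - ∑ i ∈ Np, Ap p i| ≤ T p := by
        rw [← Finset.sum_sub_distrib]
        refine le_trans (Finset.abs_sum_le_sum_abs _ _) ?_
        rw [hTdef]
        exact Finset.sum_le_sum_of_subset_of_nonneg (Finset.subset_univ _)
          (fun i _ _ => abs_nonneg _)
      have hb : V p / r < ε₀ / 2 := by
        rw [div_lt_iff₀ hr0]
        calc V p < r * (ε₀/2) := h2
        _ = ε₀/2 * r := by ring
      calc |(∑ i ∈ Np, A0 i) - ∑ i ∈ K, A0 i|
          ≤ |(∑ i ∈ Np, A0 i) - ∑ i ∈ Np, Ap p i|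
            + |(∑ i ∈ Np, Ap p i) - ∑ i ∈ K, A0 i| := abs_sub_le _ _ _
      _ ≤ T p + V p / r := add_le_add ha h5
      _ < ε₀/2 + ε₀/2 := by linarith
      _ = ε₀ := by ring
    have hNpK : Np = K := by
      by_contra hne
      have hmem : |(∑ i ∈ Np, A0 i) - ∑ i ∈ K, A0 i| ∈ cands := by
        rw [hcdef]
        exact Finset.mem_image_of_mem _ (Finset.mem_filter.2
          ⟨Finset.mem_powerset.2 (Finset.subset_univ _), hne⟩)
      have := hε₀min _ hmem
      linarith
    have hjNp : j ∈ Np := hNpK ▸ hjK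
    have : dist (yp p j) (y0 j) ≤ r := (Finset.mem_filter.1 hjNp).2
    linarith
  obtain ⟨N, hN⟩ := eventually_atTop.1 hfinal
  exact ⟨N, hN⟩

/-- Stability of the token images: if `μ₀ ∈ M⁺_{fin,dif,(n)}(Ω)` and
`μ_p = ∑ aᵖᵢ δ_{xᵖᵢ}` with `xᵖᵢ → x⁰ᵢ`, `aᵖᵢ → a⁰ᵢ`, and `f(μ₀) = ∑ a⁰ᵢ δ_{y⁰ᵢ}`,
`f(μ_p) = ∑ aᵖᵢ δ_{yᵖᵢ}`, then `yᵖⱼ → y⁰ⱼ` for every `j`. -/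
theorem token_images_converge {d d' : ℕ}
    (Ω : Set (EuclideanSpace ℝ (Fin d))) (hΩne : Ω.Nonempty) (hΩcpt : IsCompact Ω)
    (f : Measure (EuclideanSpace ℝ (Fin d)) → Measure (EuclideanSpace ℝ (Fin d')))
    (hsp : SupportPreserving Ω f) (hcont : W1Continuous Ω f)
    (n : ℕ) (hn : 0 < n)
    (x0 : Fin n → EuclideanSpace ℝ (Fin d)) (a0 : Fin n → ℝ)
    (hx0 : ∀ i, x0 i ∈ Ω) (ha0 : ∀ i, 0 < a0 i)
    (hdif : ∀ J K : Finset (Fin n), J.Nonempty → K.Nonempty → Disjoint J K →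
      ∑ j ∈ J, a0 j ≠ ∑ k ∈ K, a0 k)
    (xp : ℕ → Fin n → EuclideanSpace ℝ (Fin d)) (ap : ℕ → Fin n → ℝ)
    (hxp : ∀ p i, xp p i ∈ Ω) (hap : ∀ p i, 0 < ap p i)
    (hxconv : ∀ i, Filter.Tendsto (fun p => xp p i) Filter.atTop (nhds (x0 i)))
    (haconv : ∀ i, Filter.Tendsto (fun p => ap p i) Filter.atTop (nhds (a0 i)))
    (y0 : Fin n → EuclideanSpace ℝ (Fin d'))
    (yp : ℕ → Fin n → EuclideanSpace ℝ (Fin d'))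
    (hy0 : f (∑ i, ENNReal.ofReal (a0 i) • Measure.dirac (x0 i))
      = ∑ i, ENNReal.ofReal (a0 i) • Measure.dirac (y0 i))
    (hyp : ∀ p, f (∑ i, ENNReal.ofReal (ap p i) • Measure.dirac (xp p i))
      = ∑ i, ENNReal.ofReal (ap p i) • Measure.dirac (yp p i)) :
    ∀ j : Fin n, Filter.Tendsto (fun p => yp p j) Filter.atTop (nhds (y0 j)) := by
  classical
  intro j
  have ha0le : ∀ i, 0 ≤ a0 i := fun i => (ha0 i).le
  have haple : ∀ p i, 0 ≤ ap p i := fun p i => (hap p i).le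
  have hs0 : 0 < ∑ i, a0 i := Finset.sum_pos (fun i _ => ha0 i) ⟨j, Finset.mem_univ j⟩
  have hsp : ∀ p, 0 < ∑ i, ap p i :=
    fun p => Finset.sum_pos (fun i _ => hap p i) ⟨j, Finset.mem_univ j⟩
  have hspconv : Filter.Tendsto (fun p => ∑ i, ap p i) Filter.atTop (nhds (∑ i, a0 i)) :=
    tendsto_finset_sum _ fun i _ => haconv i
  -- normalized weights
  set A0 : Fin n → ℝ := fun i => a0 i / ∑ k, a0 k with hA0def
  set Ap2 : ℕ → Fin n → ℝ := fun p i => ap p i / ∑ k, ap p k with hAp2def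
  have hA0pos : ∀ i, 0 < A0 i := fun i => div_pos (ha0 i) hs0
  have hAppos : ∀ p i, 0 < Ap2 p i := fun p i => div_pos (hap p i) (hsp p)
  have hA0sum : ∑ i, A0 i = 1 := by
    simp only [hA0def]
    rw [← Finset.sum_div, div_self hs0.ne']
  have hApsum : ∀ p, ∑ i, Ap2 p i = 1 := by
    intro p
    simp only [hAp2def]
    rw [← Finset.sum_div, div_self (hsp p).ne']
  have hApconv : ∀ i, Filter.Tendsto (fun p => Ap2 p i) Filter.atTop (nhds (A0 i)) :=
    fun i => (haconv i).div hspconv hs0.ne'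
  -- distinctness of normalized subset sums
  have hdif' : ∀ N M : Finset (Fin n), N ≠ M → ∑ i ∈ N, A0 i ≠ ∑ i ∈ M, A0 i := by
    intro N M hNM heq
    have hraw : ∑ i ∈ N, a0 i = ∑ i ∈ M, a0 i := by
      simp only [hA0def, ← Finset.sum_div] at heq
      rw [div_eq_div_iff hs0.ne' hs0.ne'] at heq
      exact mul_right_cancel₀ hs0.ne' heq
    have hdisj : Disjoint (N \ M) (M \ N) := disjoint_sdiff_sdiff
    have hsum : ∑ i ∈ N \ M, a0 i = ∑ i ∈ M \ N, a0 i := by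
      have h1 := Finset.sum_inter_add_sum_sdiff N M a0
      have h2 := Finset.sum_inter_add_sum_sdiff M N a0
      rw [Finset.inter_comm] at h2
      linarith
    rcases Finset.eq_empty_or_nonempty (N \ M) with hJ | hJ
    · rcases Finset.eq_empty_or_nonempty (M \ N) with hK | hK
      · exact hNM (Finset.Subset.antisymm (Finset.sdiff_eq_empty_iff_subset.1 hJ)
          (Finset.sdiff_eq_empty_iff_subset.1 hK))
      · have hpos : 0 < ∑ i ∈ M \ N, a0 i := Finset.sum_pos (fun i _ => ha0 i) hK
        rw [hJ, Finset.sum_empty] at hsum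
        linarith
    · rcases Finset.eq_empty_or_nonempty (M \ N) with hK | hK
      · have hpos : 0 < ∑ i ∈ N \ M, a0 i := Finset.sum_pos (fun i _ => ha0 i) hJ
        rw [hK, Finset.sum_empty] at hsum
        linarith
      · exact hdif _ _ hJ hK hdisj hsum
  -- the measures
  set μ0 : Measure (EuclideanSpace ℝ (Fin d)) :=
    ∑ i, ENNReal.ofReal (a0 i) • Measure.dirac (x0 i) with hμ0def
  set μP : ℕ → Measure (EuclideanSpace ℝ (Fin d)) :=
    fun p => ∑ i, ENNReal.ofReal (ap p i) • Measure.dirac (xp p i) with hμPdef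
  set ν0 : Measure (EuclideanSpace ℝ (Fin d')) :=
    ∑ i, ENNReal.ofReal (a0 i) • Measure.dirac (y0 i) with hν0def
  set νP : ℕ → Measure (EuclideanSpace ℝ (Fin d')) :=
    fun p => ∑ i, ENNReal.ofReal (ap p i) • Measure.dirac (yp p i) with hνPdef
  have hfμ0 : f μ0 = ν0 := hy0
  have hfμP : ∀ p, f (μP p) = νP p := fun p => hyp p
  have hmass0 : μ0 Set.univ = ENNReal.ofReal (∑ i, a0 i) := by
    rw [hμ0def]; exact mass_wsum a0 ha0le x0
  have hmassP : ∀ p, μP p Set.univ = ENNReal.ofReal (∑ i, ap p i) := by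
    intro p; rw [hμPdef]; exact mass_wsum (ap p) (haple p) (xp p)
  have hmassY0 : ν0 Set.univ = ENNReal.ofReal (∑ i, a0 i) := by
    rw [hν0def]; exact mass_wsum a0 ha0le y0
  have hmassYP : ∀ p, νP p Set.univ = ENNReal.ofReal (∑ i, ap p i) := by
    intro p; rw [hνPdef]; exact mass_wsum (ap p) (haple p) (yp p)
  have hInt0 : ∀ φ : EuclideanSpace ℝ (Fin d) → ℝ,
      ∫ z, φ z ∂((μ0 Set.univ)⁻¹ • μ0) = ∑ i, A0 i * φ (x0 i) := by
    intro φ; rw [hμ0def]; exact integral_normalized a0 ha0le hs0 x0 φ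
  have hIntP : ∀ p (φ : EuclideanSpace ℝ (Fin d) → ℝ),
      ∫ z, φ z ∂((μP p Set.univ)⁻¹ • μP p) = ∑ i, Ap2 p i * φ (xp p i) := by
    intro p φ; rw [hμPdef]; exact integral_normalized (ap p) (haple p) (hsp p) (xp p) φ
  have hIntY0 : ∀ φ : EuclideanSpace ℝ (Fin d') → ℝ,
      ∫ z, φ z ∂((ν0 Set.univ)⁻¹ • ν0) = ∑ i, A0 i * φ (y0 i) := by
    intro φ; rw [hν0def]; exact integral_normalized a0 ha0le hs0 y0 φ
  have hIntYP : ∀ p (φ : EuclideanSpace ℝ (Fin d') → ℝ),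
      ∫ z, φ z ∂((νP p Set.univ)⁻¹ • νP p) = ∑ i, Ap2 p i * φ (yp p i) := by
    intro p φ; rw [hνPdef]; exact integral_normalized (ap p) (haple p) (hsp p) (yp p) φ
  -- Part 1: W1ext μ0 (μP p) → 0
  set b : EuclideanSpace ℝ (Fin d) := x0 ⟨0, hn⟩ with hbdef
  have hBtend : Filter.Tendsto (fun p => (∑ i, |A0 i - Ap2 p i| * dist (x0 i) b)
      + ∑ i, Ap2 p i * dist (x0 i) (xp p i)) Filter.atTop (nhds 0) := by
    have h1 : Filter.Tendsto (fun p => ∑ i, |A0 i - Ap2 p i| * dist (x0 i) b)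
        Filter.atTop (nhds 0) := by
      have := tendsto_finset_sum (Finset.univ : Finset (Fin n)) (fun i _ =>
        ((Filter.Tendsto.const_sub (A0 i) (hApconv i)).abs).mul_const (dist (x0 i) b))
      simpa using this
    have h2 : Filter.Tendsto (fun p => ∑ i, Ap2 p i * dist (x0 i) (xp p i))
        Filter.atTop (nhds 0) := by
      have := tendsto_finset_sum (Finset.univ : Finset (Fin n)) (fun i _ =>
        (hApconv i).mul (Filter.Tendsto.dist
          (tendsto_const_nhds : Filter.Tendsto (fun _ : ℕ => x0 i) Filter.atTop (nhds (x0 i)))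
          (hxconv i)))
      simpa using this
    simpa using h1.add h2
  have hW1extTend : Filter.Tendsto (fun p => W1ext μ0 (μP p)) Filter.atTop (nhds 0) := by
    refine squeeze_zero (g := fun p => ((∑ i, |A0 i - Ap2 p i| * dist (x0 i) b)
        + ∑ i, Ap2 p i * dist (x0 i) (xp p i)) + |(∑ i, a0 i) - ∑ i, ap p i|)
      (fun p => add_nonneg (W1_nonneg _ _) (abs_nonneg _)) (fun p => ?_) ?_
    · simp only [W1ext]
      refine add_le_add ?_ ?_
      · refine W1_le (add_nonneg (Finset.sum_nonneg fun i _ =>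
          mul_nonneg (abs_nonneg _) dist_nonneg) (Finset.sum_nonneg fun i _ =>
          mul_nonneg (hAppos p i).le dist_nonneg)) (fun φ hφ => ?_)
        rw [hInt0 φ, hIntP p φ]
        exact discrete_term_bound A0 (Ap2 p) (fun i => (hAppos p i).le) hA0sum (hApsum p)
          x0 (xp p) b hφ
      · rw [hmass0, hmassP p, ENNReal.toReal_ofReal hs0.le,
          ENNReal.toReal_ofReal (hsp p).le]
    · have habs2 : Filter.Tendsto (fun p => |(∑ i, a0 i) - ∑ i, ap p i|)
          Filter.atTop (nhds 0) := by
        have := (Filter.Tendsto.const_sub (∑ i, a0 i) hspconv).abs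
        simpa using this
      simpa using hBtend.add habs2
  -- Part 2: continuity transfers to images
  have hΩm : MeasurableSet Ω := hΩcpt.isClosed.measurableSet
  have hμ0mem : μ0 ∈ Mplus Ω := by
    rw [hμ0def]; exact mem_Mplus_wsum hΩm a0 ha0le hs0 x0 hx0
  have hμPmem : ∀ p, μP p ∈ Mplus Ω := by
    intro p
    rw [hμPdef]; exact mem_Mplus_wsum hΩm (ap p) (haple p) (hsp p) (xp p) (hxp p)
  have hW1ext_nonneg : ∀ (μ ν : Measure (EuclideanSpace ℝ (Fin d'))), 0 ≤ W1ext μ ν :=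
    fun μ ν => add_nonneg (W1_nonneg _ _) (abs_nonneg _)
  have himageTend : Filter.Tendsto (fun p => W1ext (f μ0) (f (μP p)))
      Filter.atTop (nhds 0) := by
    rw [NormedAddCommGroup.tendsto_nhds_zero]
    intro ε hε
    obtain ⟨δ, hδ, hδ2⟩ := hcont μ0 hμ0mem ε hε
    filter_upwards [hW1extTend.eventually_lt_const hδ] with p hp
    rw [Real.norm_eq_abs, abs_of_nonneg (hW1ext_nonneg _ _)]
    exact hδ2 (μP p) (hμPmem p) hp
  set V : ℕ → ℝ := fun p => W1 ((ν0 Set.univ)⁻¹ • ν0) ((νP p Set.univ)⁻¹ • νP p) with hVdef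
  have hVtend : Filter.Tendsto V Filter.atTop (nhds 0) := by
    refine squeeze_zero (fun p => W1_nonneg _ _) (fun p => ?_) himageTend
    rw [hfμ0, hfμP p]
    simp only [W1ext]
    exact le_add_of_nonneg_right (abs_nonneg _)
  -- Part 3: abstract estimate
  have habs : ∀ p (φ : EuclideanSpace ℝ (Fin d') → ℝ), LipschitzWith 1 φ →
      |(∑ i, A0 i * φ (y0 i)) - ∑ i, Ap2 p i * φ (yp p i)| ≤ V p := by
    intro p φ hφ
    have hbound : ∀ ψ : EuclideanSpace ℝ (Fin d') → ℝ, LipschitzWith 1 ψ →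
        (∫ z, ψ z ∂((ν0 Set.univ)⁻¹ • ν0)) - ∫ z, ψ z ∂((νP p Set.univ)⁻¹ • νP p)
          ≤ ∑ i, |A0 i - Ap2 p i| * dist (y0 i) (y0 j)
            + ∑ i, Ap2 p i * dist (y0 i) (yp p i) := by
      intro ψ hψ
      rw [hIntY0 ψ, hIntYP p ψ]
      exact discrete_term_bound A0 (Ap2 p) (fun i => (hAppos p i).le) hA0sum (hApsum p)
        y0 (yp p) (y0 j) hψ
    rw [abs_sub_le_iff]
    constructor
    · have h := le_W1 hbound hφ
      rw [hIntY0 φ, hIntYP p φ] at h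
      exact h
    · have h := le_W1 hbound (LipschitzWith.neg hφ)
      rw [hIntY0 (-φ), hIntYP p (-φ)] at h
      simp only [Pi.neg_apply, mul_neg, Finset.sum_neg_distrib] at h
      linarith
  exact key_stability A0 Ap2 hA0pos hAppos hApconv hdif' y0 yp V hVtend habs j
end

section
/- Let Ω = [−3,3] ⊂ ℝ. For a ≥ 0 define R_a : [−3,3] → [−3,3] by R_a(x) = x for |x| ≥ 1 and R_a(x) = x + (1/10)·cos²(πx/2)·cos(ax) for |x| < 1. For a probability measure μ on Ω set κ(μ) := ∫_{[−2,−1]} (2−|x|) dμ(x) + μ([−1,1]) + ∫_{[1,2]} (2−x) dμ(x), a(μ) := 1/κ(μ) if κ(μ) > 0 and a(μ) := 0 otherwise, and f(μ) := (R_{a(μ)})_# μ. Then there is no map G : P([−3,3]) × [−3,3] → [−3,3] that is continuous (with the 1-Wasserstein topology on P([−3,3])) and satisfies f(μ) = G(μ,·)_# μ for all μ ∈ P([−3,3]). -/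
open MeasureTheory Filter Set
open scoped ENNReal

/-- `P(Ω)`: the Borel probability measures supported in `Ω`. -/
def ProbOn {E : Type*} [MeasurableSpace E] (Ω : Set E) : Set (Measure E) :=
  {μ | IsProbabilityMeasure μ ∧ μ Ωᶜ = 0}

/-- A map `f : P(Ω) → P(Ω)` is support-preserving. -/
def SupportPreservingProb {E : Type*} [MeasurableSpace E]
    (Ω : Set E) (f : Measure E → Measure E) : Prop :=
  ∀ n : ℕ, 0 < n → ∀ x : Fin n → E, (∀ i, x i ∈ Ω) →
    ∃ y : Fin n → E, (∀ i, y i ∈ Ω) ∧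
      f (∑ i, ((n : ℝ≥0∞))⁻¹ • Measure.dirac (x i))
        = ∑ i, ((n : ℝ≥0∞))⁻¹ • Measure.dirac (y i) ∧
      ∀ i j, x i = x j → y i = y j

/-- `R_a(x) = x + (1/10)·cos²(πx/2)·cos(ax)` for `|x| < 1`, and `R_a(x) = x` otherwise. -/
noncomputable def Rmap (a x : ℝ) : ℝ :=
  if |x| < 1 then x + (1 / 10) * Real.cos (Real.pi * x / 2) ^ 2 * Real.cos (a * x) else x

/-- `κ(μ) = ∫_{[-2,-1)} (2-|x|) dμ + μ([-1,1]) + ∫_{(1,2]} (2-x) dμ`. -/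
noncomputable def kappa (μ : Measure ℝ) : ℝ :=
  (∫ x in Set.Ico (-2 : ℝ) (-1), (2 - |x|) ∂μ)
    + (μ (Set.Icc (-1 : ℝ) 1)).toReal
    + ∫ x in Set.Ioc (1 : ℝ) 2, (2 - x) ∂μ

/-- `a(μ) = 1/κ(μ)` if `κ(μ) > 0`, and `a(μ) = 0` otherwise. -/
noncomputable def amu (μ : Measure ℝ) : ℝ :=
  if 0 < kappa μ then (kappa μ)⁻¹ else 0

/-- The counterexample map `f(μ) = (R_{a(μ)})_♯ μ`. -/
noncomputable def fCounter (μ : Measure ℝ) : Measure ℝ :=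
  Measure.map (Rmap (amu μ)) μ

/-! ### Auxiliary lemmas -/

lemma measurable_Rmap (a : ℝ) : Measurable (Rmap a) := by
  unfold Rmap
  refine Measurable.ite ?_ (by fun_prop) measurable_id
  exact measurableSet_lt (by fun_prop) measurable_const

lemma Rmap_of_not (a x : ℝ) (h : ¬ |x| < 1) : Rmap a x = x := if_neg h

lemma Rmap_half (a : ℝ) :
    Rmap a (1/2) = 1/2 + (1/20) * Real.cos (a * (1/2)) := by
  have h : |(1/2 : ℝ)| < 1 := by rw [abs_of_nonneg] <;> norm_num
  rw [Rmap, if_pos h]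
  have h2 : Real.pi * (1/2) / 2 = Real.pi / 4 := by ring
  rw [h2, Real.cos_pi_div_four, div_pow, Real.sq_sqrt (by norm_num : (0:ℝ) ≤ 2)]
  ring

lemma integrable_dirac'' (f : ℝ → ℝ) (a : ℝ) : Integrable f (Measure.dirac a) := by
  refine (integrable_const (f a)).congr ?_
  refine (Filter.eventuallyEq_iff_exists_mem.mpr ⟨{a}, ?_, ?_⟩)
  · rw [mem_ae_iff]
    rw [Measure.dirac_apply' a (measurableSet_singleton a).compl]
    simp
  · intro x hx; simp at hx; simp [hx]

noncomputable def testμ (ε : ℝ) : Measure ℝ :=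
  ENNReal.ofReal (1-ε) • Measure.dirac 3 + ENNReal.ofReal ε • Measure.dirac (1/2)

lemma testμ_apply (ε : ℝ) {s : Set ℝ} (hs : MeasurableSet s) :
    testμ ε s = ENNReal.ofReal (1-ε) * s.indicator 1 3
      + ENNReal.ofReal ε * s.indicator 1 (1/2) := by
  rw [testμ, Measure.add_apply, Measure.smul_apply, Measure.smul_apply,
    Measure.dirac_apply' _ hs, Measure.dirac_apply' _ hs, smul_eq_mul, smul_eq_mul]

lemma testμ_prob {ε : ℝ} (h0 : 0 ≤ ε) (h1 : ε ≤ 1) : IsProbabilityMeasure (testμ ε) := by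
  constructor
  rw [testμ_apply ε MeasurableSet.univ]
  simp only [indicator_of_mem (mem_univ _), Pi.one_apply, mul_one]
  rw [← ENNReal.ofReal_add (by linarith) h0]
  norm_num

lemma testμ_mem {ε : ℝ} (h0 : 0 ≤ ε) (h1 : ε ≤ 1) :
    testμ ε ∈ ProbOn (Set.Icc (-3 : ℝ) 3) := by
  refine ⟨testμ_prob h0 h1, ?_⟩
  rw [testμ_apply ε measurableSet_Icc.compl]
  have h3 : (3:ℝ) ∈ Set.Icc (-3:ℝ) 3 := by norm_num
  have h12 : (1/2:ℝ) ∈ Set.Icc (-3:ℝ) 3 := by norm_num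
  rw [indicator_of_notMem (by simpa using h3), indicator_of_notMem (by simpa using h12)]
  simp

lemma testμ_integral {ε : ℝ} (h0 : 0 ≤ ε) (h1 : ε ≤ 1) (f : ℝ → ℝ) :
    ∫ x, f x ∂(testμ ε) = (1-ε) * f 3 + ε * f (1/2) := by
  rw [testμ, integral_add_measure, integral_smul_measure, integral_smul_measure,
    integral_dirac, integral_dirac, ENNReal.toReal_ofReal (by linarith),
    ENNReal.toReal_ofReal h0, smul_eq_mul, smul_eq_mul]
  · exact (integrable_dirac'' f 3).smul_measure ENNReal.ofReal_ne_top
  · exact (integrable_dirac'' f (1/2)).smul_measure ENNReal.ofReal_ne_top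

lemma two_dirac_eq {x y a b : ℝ} {P Q : ℝ≥0∞} (hQ : Q ≠ 0)
    (hPt : P ≠ ⊤) (hPQ : P ≠ Q) (hxy : x ≠ y)
    (h : P • Measure.dirac x + Q • Measure.dirac y
       = P • Measure.dirac a + Q • Measure.dirac b) : b = y := by
  have happ : ∀ s : Set ℝ, MeasurableSet s →
      P * s.indicator 1 x + Q * s.indicator 1 y
      = P * s.indicator 1 a + Q * s.indicator 1 b := by
    intro s hs
    have := congrArg (fun m : Measure ℝ => m s) h
    simpa [Measure.add_apply, Measure.smul_apply, smul_eq_mul,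
      Measure.dirac_apply' _ hs] using this
  have hb : b = x ∨ b = y := by
    by_contra hc
    push_neg at hc
    have := happ {b} (measurableSet_singleton b)
    rw [indicator_of_notMem (by simp [hc.1.symm] : x ∉ ({b} : Set ℝ)),
      indicator_of_notMem (by simp [hc.2.symm] : y ∉ ({b} : Set ℝ)),
      indicator_of_mem (mem_singleton b)] at this
    simp only [Pi.one_apply, mul_one, mul_zero, add_zero, zero_add] at this
    exact hQ ((add_eq_zero.mp this.symm).2)
  rcases hb with hb | hb
  · exfalso
    subst hb
    have := happ {b} (measurableSet_singleton b)
    rw [indicator_of_mem (mem_singleton b),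
      indicator_of_notMem (by simp [Ne.symm hxy] : y ∉ ({b} : Set ℝ)),
      Pi.one_apply, mul_one, mul_zero, add_zero] at this
    by_cases ha : a = b
    · subst ha
      rw [indicator_of_mem (mem_singleton a)] at this
      simp only [Pi.one_apply, mul_one] at this
      have h0 : P + 0 = P + Q := by rw [add_zero]; exact this
      exact hQ ((ENNReal.add_right_inj hPt).mp h0).symm
    · rw [indicator_of_notMem (by simp [ha] : a ∉ ({b} : Set ℝ))] at this
      simp only [Pi.one_apply, mul_one, mul_zero, zero_add] at this
      exact hPQ (by simpa using this)
  · exact hb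

lemma kappa_testμ {ε : ℝ} (h0 : 0 ≤ ε) (h1 : ε ≤ 1) : kappa (testμ ε) = ε := by
  unfold kappa
  have e1 : testμ ε (Set.Ico (-2:ℝ) (-1)) = 0 := by
    rw [testμ_apply ε measurableSet_Ico]
    rw [indicator_of_notMem (by norm_num), indicator_of_notMem (by norm_num)]
    simp
  have e3 : testμ ε (Set.Ioc (1:ℝ) 2) = 0 := by
    rw [testμ_apply ε measurableSet_Ioc]
    rw [indicator_of_notMem (by norm_num), indicator_of_notMem (by norm_num)]
    simp
  have e2 : testμ ε (Set.Icc (-1:ℝ) 1) = ENNReal.ofReal ε := by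
    rw [testμ_apply ε measurableSet_Icc]
    rw [indicator_of_notMem (by norm_num), indicator_of_mem (by norm_num)]
    simp
  rw [Measure.restrict_eq_zero.mpr e1, Measure.restrict_eq_zero.mpr e3,
    integral_zero_measure, integral_zero_measure, e2, ENNReal.toReal_ofReal h0]
  ring

lemma amu_testμ {ε : ℝ} (h0 : 0 < ε) (h1 : ε ≤ 1) : amu (testμ ε) = ε⁻¹ := by
  rw [amu, kappa_testμ h0.le h1, if_pos h0]

lemma fCounter_testμ {ε : ℝ} (h0 : 0 < ε) (h1 : ε ≤ 1) :
    fCounter (testμ ε) = ENNReal.ofReal (1-ε) • Measure.dirac 3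
      + ENNReal.ofReal ε • Measure.dirac (1/2 + (1/20) * Real.cos (ε⁻¹ * (1/2))) := by
  rw [fCounter, amu_testμ h0 h1, testμ, Measure.map_add _ _ (measurable_Rmap _),
    Measure.map_smul, Measure.map_smul, Measure.map_dirac' (measurable_Rmap _),
    Measure.map_dirac' (measurable_Rmap _),
    Rmap_of_not _ 3 (by rw [abs_of_nonneg] <;> norm_num), Rmap_half]

lemma map_G_testμ {ε : ℝ} (G : ℝ → ℝ) :
    Measure.map G (testμ ε) = ENNReal.ofReal (1-ε) • Measure.dirac (G 3)
      + ENNReal.ofReal ε • Measure.dirac (G (1/2)) := by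
  set h : ℝ → ℝ := fun x => if x = 3 then G 3 else G (1/2) with hh
  have hmeas : Measurable h := Measurable.ite (measurableSet_eq) measurable_const
    measurable_const
  have hae : G =ᵐ[testμ ε] h := by
    rw [Filter.eventuallyEq_iff_exists_mem]
    refine ⟨{3, 1/2}, ?_, ?_⟩
    · rw [mem_ae_iff]
      have hc : MeasurableSet (({3, (1/2:ℝ)} : Set ℝ)ᶜ) := by
        measurability
      rw [testμ_apply ε hc]
      rw [indicator_of_notMem (by simp), indicator_of_notMem (by simp)]
      simp
    · intro x hx
      rcases hx with hx | hx
      · simp [hh, hx]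
      · simp only [mem_singleton_iff] at hx
        subst hx
        simp only [hh]
        rw [if_neg (by norm_num)]
  rw [Measure.map_congr hae, testμ, Measure.map_add _ _ hmeas, Measure.map_smul,
    Measure.map_smul, Measure.map_dirac' hmeas, Measure.map_dirac' hmeas]
  have h3 : h 3 = G 3 := by simp [hh]
  have h12 : h (1/2) = G (1/2) := by norm_num [hh]
  rw [h3, h12]

lemma key (G : Measure ℝ → ℝ → ℝ)
    (hpush : ∀ μ ∈ ProbOn (Set.Icc (-3 : ℝ) 3), fCounter μ = Measure.map (G μ) μ)
    {ε : ℝ} (h0 : 0 < ε) (h1 : ε < 1/2) :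
    G (testμ ε) (1/2) = 1/2 + (1/20) * Real.cos (ε⁻¹ * (1/2)) := by
  have h1' : ε ≤ 1 := by linarith
  have heq := (fCounter_testμ h0 h1').symm.trans
    ((hpush (testμ ε) (testμ_mem h0.le h1')).trans (map_G_testμ (G (testμ ε))))
  refine two_dirac_eq ?_ ?_ ?_ ?_ heq
  · simpa using (ENNReal.ofReal_pos.mpr h0).ne'
  · exact ENNReal.ofReal_ne_top
  · intro hc
    rw [ENNReal.ofReal_eq_ofReal_iff (by linarith) h0.le] at hc
    linarith
  · have hc1 : Real.cos (ε⁻¹ * (1/2)) ≤ 1 := Real.cos_le_one _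
    intro hc
    nlinarith [Real.cos_le_one (ε⁻¹ * (1/2))]

lemma W1_testμ {ε : ℝ} (h0 : 0 ≤ ε) (h1 : ε ≤ 1) :
    W1 (Measure.dirac 3) (testμ ε) ≤ 3 * ε := by
  refine Real.iSup_le ?_ (by linarith)
  rintro ⟨φ, hφ⟩
  simp only
  rw [integral_dirac, testμ_integral h0 h1]
  have hd : φ 3 - φ (1/2) ≤ 5/2 := by
    have := hφ.dist_le_mul 3 (1/2)
    rw [Real.dist_eq, Real.dist_eq] at this
    have h2 : |(3:ℝ) - 1/2| = 5/2 := by rw [abs_of_nonneg] <;> norm_num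
    rw [h2] at this
    calc φ 3 - φ (1/2) ≤ |φ 3 - φ (1/2)| := le_abs_self _
      _ ≤ 5/2 := by simpa using this
  nlinarith

/-- There is no in-context map `G : P([-3,3]) × [-3,3] → [-3,3]`, continuous
with respect to the 1-Wasserstein topology, with `f(μ) = G(μ,·)_♯ μ` for all `μ ∈ P([-3,3])`,
where `f(μ) = (R_{a(μ)})_♯ μ` is the counterexample map. -/
theorem fCounter_not_inContext :
    ¬ ∃ G : Measure ℝ → ℝ → ℝ,
        (∀ μ ∈ ProbOn (Set.Icc (-3 : ℝ) 3), ∀ x ∈ Set.Icc (-3 : ℝ) 3,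
          G μ x ∈ Set.Icc (-3 : ℝ) 3) ∧
        (∀ μ ∈ ProbOn (Set.Icc (-3 : ℝ) 3), ∀ x ∈ Set.Icc (-3 : ℝ) 3, ∀ ε > (0 : ℝ),
          ∃ δ > (0 : ℝ), ∀ ν ∈ ProbOn (Set.Icc (-3 : ℝ) 3), ∀ y ∈ Set.Icc (-3 : ℝ) 3,
            W1 μ ν + dist x y < δ → dist (G μ x) (G ν y) < ε) ∧
        (∀ μ ∈ ProbOn (Set.Icc (-3 : ℝ) 3), fCounter μ = Measure.map (G μ) μ) := by
  rintro ⟨G, -, hcont, hpush⟩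
  have hpi := Real.pi_gt_three
  have hdmem : Measure.dirac (3:ℝ) ∈ ProbOn (Set.Icc (-3 : ℝ) 3) := by
    refine ⟨Measure.dirac.isProbabilityMeasure, ?_⟩
    rw [Measure.dirac_apply' _ measurableSet_Icc.compl]
    rw [indicator_of_notMem (by norm_num)]
  have h12 : (1/2 : ℝ) ∈ Set.Icc (-3:ℝ) 3 := by norm_num
  obtain ⟨δ, hδ0, hδ⟩ := hcont (Measure.dirac 3) hdmem (1/2) h12 (1/25) (by norm_num)
  obtain ⟨k, hk⟩ := exists_nat_gt (max (1/δ) 1)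
  have hk1 : (1:ℝ) ≤ k := le_of_lt (lt_of_le_of_lt (le_max_right _ _) hk)
  have hkδ : 1/δ < k := lt_of_le_of_lt (le_max_left _ _) hk
  -- first epsilon : cos = 1
  set ε₁ : ℝ := (4 * Real.pi * k)⁻¹ with hε₁
  have hε₁pos : 0 < ε₁ := by positivity
  have hε₁half : ε₁ < 1/2 := by
    rw [hε₁]
    rw [inv_lt_comm₀ (by positivity) (by norm_num)]
    nlinarith
  have hcos1 : Real.cos (ε₁⁻¹ * (1/2)) = 1 := by
    rw [hε₁, inv_inv]
    have : 4 * Real.pi * k * (1/2) = (k:ℝ) * (2 * Real.pi) := by ring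
    rw [this, Real.cos_nat_mul_two_pi]
  have hW1 : W1 (Measure.dirac 3) (testμ ε₁) ≤ 3 * ε₁ := W1_testμ hε₁pos.le (by linarith)
  have h3ε₁ : 3 * ε₁ < δ := by
    rw [hε₁]
    rw [div_lt_iff₀ hδ0] at hkδ
    have h4πk : 0 < 4 * Real.pi * k := by positivity
    rw [mul_inv_lt_iff₀' h4πk]  -- maybe wrong name
    nlinarith
  have hG1 := key G hpush hε₁pos hε₁half
  rw [hcos1] at hG1
  have hd1 : dist (G (Measure.dirac 3) (1/2)) (G (testμ ε₁) (1/2)) < 1/25 := by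
    refine hδ (testμ ε₁) (testμ_mem hε₁pos.le (by linarith)) (1/2) h12 ?_
    rw [dist_self]
    linarith
  -- second epsilon : cos = -1
  set ε₂ : ℝ := (2 * (2 * k + 1) * Real.pi)⁻¹ with hε₂
  have hε₂pos : 0 < ε₂ := by positivity
  have hε₂le : ε₂ ≤ ε₁ := by
    rw [hε₁, hε₂]
    apply inv_anti₀ (by positivity)
    nlinarith
  have hcos2 : Real.cos (ε₂⁻¹ * (1/2)) = -1 := by
    rw [hε₂, inv_inv]
    have : 2 * (2 * (k:ℝ) + 1) * Real.pi * (1/2) = (k:ℝ) * (2 * Real.pi) + Real.pi := by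
      ring
    rw [this, Real.cos_nat_mul_two_pi_add_pi]
  have hG2 := key G hpush hε₂pos (lt_of_le_of_lt hε₂le hε₁half)
  rw [hcos2] at hG2
  have hd2 : dist (G (Measure.dirac 3) (1/2)) (G (testμ ε₂) (1/2)) < 1/25 := by
    refine hδ (testμ ε₂) (testμ_mem hε₂pos.le (by linarith)) (1/2) h12 ?_
    rw [dist_self]
    have := W1_testμ hε₂pos.le (by linarith : ε₂ ≤ 1)
    linarith
  rw [hG1] at hd1
  rw [hG2] at hd2
  rw [Real.dist_eq, abs_lt] at hd1 hd2
  norm_num at hd1 hd2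
  linarith
end
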